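/- For every n ≥ 1 and every k ≥ 1 there exists a U-cycle for the set of all words of length n over a k-letter alphabet; that is, there is a cyclic sequence of length k^n over Fin k whose k^n windows of length n are exactly the k^n words, each appearing exactly once. -/

import Mathlib

/-- A U-cycle for a finite set `S` of `n`-letter words over the alphabet `Fin k`:
a cyclic sequence `s` of length `|S|` whose windows of length `n` enumerate `S`
bijectively. -/
def IsUCycle {n k : ℕ} (S : Finset (Fin n → Fin k)) (s : ZMod S.card → Fin k) : Prop :=
  Set.BijOn (fun i : ZMod S.card => fun j : Fin n => s (i + ((j : ℕ) : ZMod S.card)))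
    Set.univ ↑S

namespace DeBruijnAux

open Equiv

variable {n k : ℕ}

/-- `σ` maps every word to a left-shift of it (with arbitrary new last letter). -/
def IsShiftPerm (σ : Equiv.Perm (Fin n → Fin k)) : Prop :=
  ∀ (w : Fin n → Fin k) (m : ℕ) (h : m + 1 < n), σ w ⟨m, by omega⟩ = w ⟨m + 1, h⟩

/-- Two words agreeing everywhere except possibly in position `0`. -/
def SameTail (x y : Fin n → Fin k) : Prop :=
  ∀ (m : ℕ) (h : m < n), 0 < m → x ⟨m, h⟩ = y ⟨m, h⟩

lemma pow_mod_period {α : Type*} (σ : Equiv.Perm α) {x : α} {d : ℕ}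
    (hd : (σ ^ d) x = x) (i : ℕ) : (σ ^ i) x = (σ ^ (i % d)) x := by
  have hq : ∀ q, ((σ ^ d) ^ q) x = x := by
    intro q
    induction q with
    | zero => simp
    | succ q ih => rw [pow_succ, Equiv.Perm.mul_apply, hd, ih]
  conv_lhs => rw [← Nat.mod_add_div i d]
  rw [pow_add, pow_mul, Equiv.Perm.mul_apply, hq]

lemma merge {α : Type*} [DecidableEq α] [Fintype α] (σ : Equiv.Perm α) {x y : α}
    (hxy : ¬ σ.SameCycle x y) :
    (σ * Equiv.swap x y).SameCycle x y ∧
      ∀ a, σ.SameCycle x a → (σ * Equiv.swap x y).SameCycle x a := by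
  have hne : x ≠ y := fun h => hxy (h ▸ Equiv.Perm.SameCycle.refl σ x)
  have hex : ∃ m, 0 < m ∧ (σ ^ m) x = x := ⟨orderOf σ, orderOf_pos σ, by simp [pow_orderOf_eq_one]⟩
  set d := Nat.find hex with hdd
  obtain ⟨hd0, hdx⟩ : 0 < d ∧ (σ ^ d) x = x := Nat.find_spec hex
  have key : ∀ j, 1 ≤ j → j ≤ d → ((σ * Equiv.swap x y) ^ j) y = (σ ^ j) x := by
    intro j
    induction j with
    | zero => omega
    | succ j ih =>
      intro _ hjd
      rcases Nat.eq_zero_or_pos j with rfl | hj1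
      · simp [Equiv.Perm.mul_apply]
      · have hjx : (σ ^ j) x ≠ x := by
          have := Nat.find_min hex (m := j) (by omega)
          push_neg at this
          exact this hj1
        have hjy : (σ ^ j) x ≠ y := fun h => hxy ⟨(j : ℤ), by simpa [zpow_natCast] using h⟩
        rw [pow_succ', Equiv.Perm.mul_apply, ih hj1 (by omega), Equiv.Perm.mul_apply,
          Equiv.swap_apply_of_ne_of_ne hjx hjy, pow_succ', Equiv.Perm.mul_apply]
  have hA : (σ * Equiv.swap x y).SameCycle y x :=
    ⟨(d : ℤ), by rw [zpow_natCast, key d hd0 le_rfl, hdx]⟩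
  refine ⟨hA.symm, fun a ha => ?_⟩
  obtain ⟨i, _, hi⟩ := ha.exists_pow_eq'
  rw [pow_mod_period σ hdx] at hi
  rcases Nat.eq_zero_or_pos (i % d) with h0 | h1
  · rw [h0] at hi; simp at hi; exact hi ▸ Equiv.Perm.SameCycle.refl _ _
  · have : ((σ * Equiv.swap x y) ^ (i % d)) y = a := by
      rw [key (i % d) h1 (le_of_lt (Nat.mod_lt i hd0)), hi]
    exact hA.symm.trans ⟨((i % d : ℕ) : ℤ), by rw [zpow_natCast, this]⟩

def rotPerm (n k : ℕ) : Equiv.Perm (Fin n → Fin k) where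
  toFun w := w ∘ (finRotate n)
  invFun w := w ∘ (finRotate n).symm
  left_inv w := by funext i; exact congrArg w ((finRotate n).apply_symm_apply i)
  right_inv w := by funext i; exact congrArg w ((finRotate n).symm_apply_apply i)

lemma rotPerm_isShift : IsShiftPerm (rotPerm n k) := by
  intro w m h
  cases n with
  | zero => omega
  | succ n' =>
    show w (finRotate (n' + 1) ⟨m, by omega⟩) = w ⟨m + 1, h⟩
    congr 1
    rw [finRotate_succ_apply]
    apply Fin.ext
    simp [Fin.add_def, Nat.mod_eq_of_lt h, Nat.mod_eq_of_lt (by omega : (1:ℕ) < n' + 1)]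


lemma orbit_closed (hn : 1 ≤ n) {σ : Equiv.Perm (Fin n → Fin k)} (hσ : IsShiftPerm σ)
    (w0 : Fin n → Fin k)
    (hcl : ∀ x, σ.SameCycle w0 x → ∀ y, SameTail x y → σ.SameCycle w0 y) :
    ∀ u, σ.SameCycle w0 u := by
  have P : ∀ j, j ≤ n → ∀ w, σ.SameCycle w0 w → ∀ u : Fin n → Fin k,
      (∀ (m : ℕ) (h : m + j < n), u ⟨m + j, h⟩ = w ⟨m, by omega⟩) → σ.SameCycle w0 u := by
    intro j
    induction j with
    | zero =>
      intro _ w hw u hu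
      have : u = w := by
        funext i
        have := hu i.val (by omega)
        simpa using this
      exact this ▸ hw
    | succ j ih =>
      intro hjn w hw u hu
      set w1 : Fin n → Fin k := σ⁻¹ w with hw1def
      have hw1 : σ.SameCycle w0 w1 := hw.trans ⟨-1, by simp [hw1def]⟩
      have hshift : ∀ (m : ℕ) (h : m + 1 < n), w1 ⟨m + 1, h⟩ = w ⟨m, by omega⟩ := by
        intro m h
        have := hσ w1 m h
        rw [show σ w1 = w by simp [hw1def]] at this
        exact this.symm
      set w2 : Fin n → Fin k :=
        Function.update w1 ⟨0, by omega⟩ (u ⟨j, by omega⟩) with hw2def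
      have htail : SameTail w1 w2 := by
        intro m h hm
        rw [hw2def, Function.update_of_ne (by simp [Fin.ext_iff]; omega)]
      have hw2 : σ.SameCycle w0 w2 := hcl w1 hw1 w2 htail
      refine ih (by omega) w2 hw2 u ?_
      intro m h
      cases m with
      | zero =>
        have h0 : w2 ⟨0, by omega⟩ = u ⟨j, by omega⟩ := by
          rw [hw2def, Function.update_self]
        rw [h0]
        congr 1
        exact Fin.ext (by simp)
      | succ m' =>
        have h2 : w2 ⟨m' + 1, by omega⟩ = w1 ⟨m' + 1, by omega⟩ := by
          rw [hw2def, Function.update_of_ne (by simp [Fin.ext_iff])]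
        rw [h2, hshift m' (by omega), ← hu m' (by omega)]
        congr 1
        exact Fin.ext (by simp; omega)
  intro u
  exact P n le_rfl w0 (Equiv.Perm.SameCycle.refl σ w0) u (fun m h => absurd h (by omega))

lemma shift_swap {σ : Equiv.Perm (Fin n → Fin k)} (hσ : IsShiftPerm σ)
    {x y : Fin n → Fin k} (ht : SameTail x y) :
    IsShiftPerm (σ * Equiv.swap x y) := by
  intro w m h
  rcases eq_or_ne w x with rfl | hwx
  · rw [Equiv.Perm.mul_apply, Equiv.swap_apply_left, hσ y m h]
    exact (ht (m + 1) (by omega) (by omega)).symm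
  rcases eq_or_ne w y with rfl | hwy
  · rw [Equiv.Perm.mul_apply, Equiv.swap_apply_right, hσ x m h]
    exact ht (m + 1) (by omega) (by omega)
  · rw [Equiv.Perm.mul_apply, Equiv.swap_apply_of_ne_of_ne hwx hwy, hσ w m h]

lemma step (hn : 1 ≤ n) (w0 : Fin n → Fin k) :
    ∀ (M : ℕ) (σ : Equiv.Perm (Fin n → Fin k)), IsShiftPerm σ →
      ({a | ¬ σ.SameCycle w0 a}.ncard ≤ M) →
      ∃ τ : Equiv.Perm (Fin n → Fin k), IsShiftPerm τ ∧ ∀ u, τ.SameCycle w0 u := by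
  intro M
  induction M with
  | zero =>
    intro σ hσ hcard
    refine ⟨σ, hσ, fun u => ?_⟩
    have : {a | ¬ σ.SameCycle w0 a} = ∅ :=
      (Set.ncard_eq_zero (Set.toFinite _)).mp (Nat.le_zero.mp hcard)
    by_contra hu
    exact absurd (this ▸ hu : u ∈ (∅ : Set (Fin n → Fin k))) (Set.notMem_empty u)
  | succ M ih =>
    intro σ hσ hcard
    by_cases hall : ∀ u, σ.SameCycle w0 u
    · exact ⟨σ, hσ, hall⟩
    have hncl : ¬ (∀ x, σ.SameCycle w0 x → ∀ y, SameTail x y → σ.SameCycle w0 y) :=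
      fun hcl => hall (orbit_closed hn hσ w0 hcl)
    push_neg at hncl
    obtain ⟨x, hx, y, hty, hy⟩ := hncl
    have hxy : ¬ σ.SameCycle x y := fun h => hy (hx.trans h)
    obtain ⟨hA, hB⟩ := merge σ hxy
    set σ' := σ * Equiv.swap x y with hσ'def
    have hσ' : IsShiftPerm σ' := shift_swap hσ hty
    have hxw0 : σ'.SameCycle x w0 := hB w0 hx.symm
    have horb : ∀ a, σ.SameCycle w0 a → σ'.SameCycle w0 a :=
      fun a ha => hxw0.symm.trans (hB a (hx.symm.trans ha))
    have hy' : σ'.SameCycle w0 y := hxw0.symm.trans hA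
    have hsub : {a | ¬ σ'.SameCycle w0 a} ⊂ {a | ¬ σ.SameCycle w0 a} := by
      constructor
      · intro a ha hsa
        exact ha (horb a hsa)
      · intro hsup
        exact (hsup hy) hy'
    have hlt : {a | ¬ σ'.SameCycle w0 a}.ncard < {a | ¬ σ.SameCycle w0 a}.ncard :=
      Set.ncard_lt_ncard hsub (Set.toFinite _)
    exact ih σ' hσ' (by omega)

lemma exists_single (hn : 1 ≤ n) (w0 : Fin n → Fin k) :
    ∃ σ : Equiv.Perm (Fin n → Fin k), IsShiftPerm σ ∧ ∀ u, σ.SameCycle w0 u :=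
  step hn w0 _ (rotPerm n k) rotPerm_isShift le_rfl

lemma iter_shift {σ : Equiv.Perm (Fin n → Fin k)} (hσ : IsShiftPerm σ) (hn : 1 ≤ n) :
    ∀ (j : ℕ) (h : j < n) (w : Fin n → Fin k), ((σ ^ j) w) ⟨0, by omega⟩ = w ⟨j, h⟩ := by
  intro j
  induction j with
  | zero => intro h w; simp
  | succ j ih =>
    intro h w
    rw [pow_succ, Equiv.Perm.mul_apply, ih (by omega) (σ w), hσ w j h]


end DeBruijnAux

open DeBruijnAux in
/-- de Bruijn's theorem: for every `n ≥ 1` and `k ≥ 1` there exists a U-cycle for the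
set of all `n`-letter words over a `k`-letter alphabet. -/

theorem exists_ucycle_all_words (n k : ℕ) (hn : 1 ≤ n) (hk : 1 ≤ k) :
    ∃ s : ZMod (Finset.univ : Finset (Fin n → Fin k)).card → Fin k,
      IsUCycle Finset.univ s := by
  set N := (Finset.univ : Finset (Fin n → Fin k)).card with hNdef
  have hw0 : Fin n → Fin k := fun _ => ⟨0, hk⟩
  set w0 : Fin n → Fin k := fun _ => ⟨0, hk⟩ with hw0def
  have hNcard : N = Fintype.card (Fin n → Fin k) := Finset.card_univ
  have hNpos : 0 < N := by
    rw [hNcard]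
    exact Fintype.card_pos_iff.mpr ⟨w0⟩
  haveI : NeZero N := ⟨by omega⟩
  obtain ⟨σ, hσ, hall⟩ := exists_single hn w0
  -- minimal period of w0
  have hex : ∃ m, 0 < m ∧ (σ ^ m) w0 = w0 :=
    ⟨orderOf σ, orderOf_pos σ, by simp [pow_orderOf_eq_one]⟩
  set d := Nat.find hex with hdd
  obtain ⟨hd0, hdw⟩ : 0 < d ∧ (σ ^ d) w0 = w0 := Nat.find_spec hex
  have hinj : ∀ i j : ℕ, i < d → j < d → (σ ^ i) w0 = (σ ^ j) w0 → i = j := by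
    have key : ∀ i j : ℕ, i ≤ j → j < d → (σ ^ i) w0 = (σ ^ j) w0 → i = j := by
      intro i j hij hjd heq
      by_contra hne
      have h1 : (σ ^ i) ((σ ^ (j - i)) w0) = (σ ^ i) w0 := by
        rw [← Equiv.Perm.mul_apply, ← pow_add]
        rw [show i + (j - i) = j by omega]
        exact heq.symm
      have h2 : (σ ^ (j - i)) w0 = w0 := (σ ^ i).injective h1
      have := Nat.find_min hex (m := j - i) (by omega)
      push_neg at this
      exact absurd h2 (this (by omega))
    intro i j hi hj heq
    rcases le_total i j with h | h
    · exact key i j h hj heq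
    · exact (key j i h hi heq.symm).symm
  have hsurj : ∀ u : Fin n → Fin k, ∃ i : ℕ, i < d ∧ (σ ^ i) w0 = u := by
    intro u
    obtain ⟨i, _, hi⟩ := (hall u).exists_pow_eq'
    exact ⟨i % d, Nat.mod_lt i hd0, by rw [← pow_mod_period σ hdw i]; exact hi⟩
  -- d = N
  have hdN : d = N := by
    have hle : d ≤ N := by
      rw [hNcard]
      have : Function.Injective (fun i : Fin d => (σ ^ (i : ℕ)) w0) := by
        intro i j hij
        exact Fin.ext (hinj i j i.isLt j.isLt hij)
      simpa using Fintype.card_le_of_injective _ this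
    have hge : N ≤ d := by
      rw [hNcard]
      have : Function.Surjective (fun i : Fin d => (σ ^ (i : ℕ)) w0) := by
        intro u
        obtain ⟨i, hi, hiu⟩ := hsurj u
        exact ⟨⟨i, hi⟩, hiu⟩
      simpa using Fintype.card_le_of_surjective _ this
    omega
  have hNw : (σ ^ N) w0 = w0 := hdN ▸ hdw
  -- the sequence
  refine ⟨fun i => (σ ^ i.val) w0 ⟨0, by omega⟩, ?_⟩
  have hwin : (fun i : ZMod N => fun j : Fin n => (σ ^ (i + ((j : ℕ) : ZMod N)).val) w0 ⟨0, by omega⟩)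
      = fun i : ZMod N => (σ ^ i.val) w0 := by
    funext i j
    have hval : (i + ((j : ℕ) : ZMod N)).val = (i.val + (j : ℕ)) % N := by
      rw [ZMod.val_add, ZMod.val_natCast]
      conv_rhs => rw [Nat.add_mod, Nat.mod_eq_of_lt (ZMod.val_lt i)]
    rw [hval, ← pow_mod_period σ hNw, add_comm, pow_add, Equiv.Perm.mul_apply,
      iter_shift hσ hn (j : ℕ) j.isLt]
  show Set.BijOn _ _ _
  have : ((Finset.univ : Finset (Fin n → Fin k)) : Set (Fin n → Fin k)) = Set.univ := by
    simp
  rw [this]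
  rw [show (fun i : ZMod N => fun j : Fin n => (σ ^ (i + ((j : ℕ) : ZMod N)).val) w0 ⟨0, by omega⟩)
      = fun i : ZMod N => (σ ^ i.val) w0 from hwin]
  refine ⟨fun x _ => Set.mem_univ _, fun a _ b _ hab => ?_, fun u _ => ?_⟩
  · have hv : a.val = b.val := hinj a.val b.val (by have := a.val_lt; omega)
      (by have := b.val_lt; omega) hab
    exact ZMod.val_injective N hv
  · obtain ⟨i, hi, hiu⟩ := hsurj u
    refine ⟨(i : ZMod N), Set.mem_univ _, ?_⟩
    show (σ ^ ((i : ZMod N)).val) w0 = u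
    rw [ZMod.val_natCast, Nat.mod_eq_of_lt (by omega)]
    exact hiu
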